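/- Let n, N ≥ 1, let λ_1,…,λ_n > 0 with Σ_k λ_k = 1, let ρ := diag(λ_1,…,λ_n), let A_1,…,A_N be Hermitian n×n complex matrices, and let m : (0,∞)×(0,∞) → ℝ satisfy 0 < m(x,y) ≤ (x+y)/2 for all x,y > 0. Then det G(m) = det Cov if and only if the centered matrices (A_1)₀, …, (A_N)₀ are linearly dependent over ℝ. -/

import Mathlib

open Matrix

private lemma re_mul_conj_comm (x y : ℂ) :
    (x * (starRingEnd ℂ) y).re = (y * (starRingEnd ℂ) x).re := by
  rw [← Complex.conj_re (x * (starRingEnd ℂ) y), RingHom.map_mul, Complex.conj_conj, mul_comm]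

private lemma gram_apply_sum {N n : ℕ} (a : Fin N → Matrix (Fin n) (Fin n) ℂ)
    (w : Fin n → Fin n → ℝ) (t : Fin N → ℝ) (h : Fin N) :
    ∑ j, (∑ k, ∑ l, w k l * (a h k l * (starRingEnd ℂ) (a j k l)).re) * t j
    = ∑ k, ∑ l, w k l * (a h k l * (starRingEnd ℂ) (∑ j, (t j : ℂ) * a j k l)).re := by
  have key : ∀ k l, w k l * (a h k l * (starRingEnd ℂ) (∑ j, (t j : ℂ) * a j k l)).re
      = ∑ j, w k l * (a h k l * (starRingEnd ℂ) (a j k l)).re * t j := by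
    intro k l
    rw [map_sum, Finset.mul_sum, Complex.re_sum, Finset.mul_sum]
    refine Finset.sum_congr rfl fun j _ => ?_
    rw [RingHom.map_mul, Complex.conj_ofReal,
      show a h k l * ((t j : ℂ) * (starRingEnd ℂ) (a j k l))
        = (t j : ℂ) * (a h k l * (starRingEnd ℂ) (a j k l)) by ring,
      Complex.re_ofReal_mul]
    ring
  simp_rw [key, Finset.sum_mul]
  rw [Finset.sum_comm]
  exact Finset.sum_congr rfl fun k _ => Finset.sum_comm

private lemma gram_quad_sum {N n : ℕ} (a : Fin N → Matrix (Fin n) (Fin n) ℂ)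
    (w : Fin n → Fin n → ℝ) (t : Fin N → ℝ) :
    ∑ h, t h * (∑ k, ∑ l, w k l * (a h k l * (starRingEnd ℂ) (∑ j, (t j : ℂ) * a j k l)).re)
    = ∑ k, ∑ l, w k l * Complex.normSq (∑ j, (t j : ℂ) * a j k l) := by
  have key : ∀ k l, w k l * Complex.normSq (∑ j, (t j : ℂ) * a j k l)
      = ∑ h, t h * (w k l * (a h k l * (starRingEnd ℂ) (∑ j, (t j : ℂ) * a j k l)).re) := by
    intro k l
    set z := ∑ j, (t j : ℂ) * a j k l with hz
    have h1 : Complex.normSq z = (z * (starRingEnd ℂ) z).re := by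
      rw [Complex.mul_conj, Complex.ofReal_re]
    rw [h1]
    conv_lhs => rw [hz, Finset.sum_mul]
    rw [Complex.re_sum, Finset.mul_sum]
    refine Finset.sum_congr rfl fun h _ => ?_
    rw [show (t h : ℂ) * a h k l * (starRingEnd ℂ) z
        = (t h : ℂ) * (a h k l * (starRingEnd ℂ) z) by ring, Complex.re_ofReal_mul]
    ring
  simp_rw [key, Finset.mul_sum]
  rw [Finset.sum_comm]
  exact Finset.sum_congr rfl fun k _ => Finset.sum_comm

/-- quadratic form of a weighted Gram matrix -/
private lemma gram_dot {N n : ℕ} (a : Fin N → Matrix (Fin n) (Fin n) ℂ)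
    (w : Fin n → Fin n → ℝ) (W : Matrix (Fin N) (Fin N) ℝ)
    (hW : ∀ h j, W h j = ∑ k, ∑ l, w k l * (a h k l * (starRingEnd ℂ) (a j k l)).re)
    (t : Fin N → ℝ) :
    t ⬝ᵥ W.mulVec t = ∑ k, ∑ l, w k l * Complex.normSq (∑ j, (t j : ℂ) * a j k l) := by
  have : t ⬝ᵥ W.mulVec t = ∑ h, t h * ∑ j, W h j * t j := by
    simp [Matrix.mulVec, dotProduct]
  rw [this]
  simp_rw [hW]
  rw [← gram_quad_sum a w t]
  exact Finset.sum_congr rfl fun h _ => by rw [gram_apply_sum a w t h]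

private lemma gram_mulVec_zero {N n : ℕ} (a : Fin N → Matrix (Fin n) (Fin n) ℂ)
    (w : Fin n → Fin n → ℝ) (W : Matrix (Fin N) (Fin N) ℝ)
    (hW : ∀ h j, W h j = ∑ k, ∑ l, w k l * (a h k l * (starRingEnd ℂ) (a j k l)).re)
    (t : Fin N → ℝ) (ht : ∀ k l, ∑ j, (t j : ℂ) * a j k l = 0) :
    W.mulVec t = 0 := by
  funext h
  have : W.mulVec t h = ∑ j, W h j * t j := by simp [Matrix.mulVec, dotProduct]
  rw [this]
  simp_rw [hW]
  rw [gram_apply_sum a w t h]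
  simp [ht]

private lemma det_lt_det_add_one {N : ℕ} (hN : 1 ≤ N) {K : Matrix (Fin N) (Fin N) ℝ}
    (hK : K.PosSemidef) : K.det < (K + 1).det := by
  have hherm := hK.isHermitian
  set μ := hherm.eigenvalues with hμ
  have hdetK : K.det = ∏ i, μ i := by
    simpa using hherm.det_eq_prod_eigenvalues
  set U : Matrix (Fin N) (Fin N) ℝ := (hherm.eigenvectorUnitary : Matrix (Fin N) (Fin N) ℝ) with hU
  have hUU : U * star U = 1 := (Matrix.mem_unitaryGroup_iff).mp hherm.eigenvectorUnitary.2
  have hspec : K = U * Matrix.diagonal (RCLike.ofReal ∘ μ) * star U := hherm.spectral_theorem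
  have hK1 : K + 1 = U * Matrix.diagonal (fun i => μ i + 1) * star U := by
    have h1 : (1 : Matrix (Fin N) (Fin N) ℝ) = U * 1 * star U := by
      rw [mul_one, hUU]
    have : Matrix.diagonal (fun i => μ i + 1) = Matrix.diagonal (RCLike.ofReal ∘ μ) + 1 := by
      rw [← Matrix.diagonal_one, Matrix.diagonal_add]
      rfl
    rw [this, Matrix.mul_add, Matrix.add_mul, ← hspec, ← h1]
  have hdetK1 : (K + 1).det = ∏ i, (μ i + 1) := by
    rw [hK1, Matrix.det_mul_right_comm, hUU, one_mul, Matrix.det_diagonal]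
  rw [hdetK, hdetK1]
  have hnonneg : ∀ i, 0 ≤ μ i := hK.eigenvalues_nonneg
  rcases Classical.em (∀ i, 0 < μ i) with hall | hnot
  · exact Finset.prod_lt_prod_of_nonempty (fun i _ => hall i)
      (fun i _ => lt_add_one _) (by simp [Finset.univ_nonempty_iff, Fin.pos_iff_nonempty.mp hN])
  · push_neg at hnot
    obtain ⟨i, hi⟩ := hnot
    have : μ i = 0 := le_antisymm hi (hnonneg i)
    rw [Finset.prod_eq_zero (Finset.mem_univ i) this]
    exact Finset.prod_pos fun i _ => by linarith [hnonneg i]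

open scoped MatrixOrder in
private lemma det_lt_det_add_of_posDef {N : ℕ} (hN : 1 ≤ N) {G M : Matrix (Fin N) (Fin N) ℝ}
    (hG : G.PosSemidef) (hM : M.PosDef) : G.det < (G + M).det := by
  have hMpsd := hM.posSemidef
  set S := CFC.sqrt M with hSdef
  have hS : S.PosSemidef := (CFC.sqrt_nonneg M).posSemidef
  have hSS : S * S = M := CFC.sqrt_mul_sqrt_self M hMpsd.nonneg
  have hdetM : 0 < M.det := hM.det_pos
  have hdetS : S.det ≠ 0 := by
    intro h
    rw [← hSS, Matrix.det_mul, h, mul_zero] at hdetM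
    exact lt_irrefl _ hdetM
  have hunit : IsUnit S.det := isUnit_iff_ne_zero.mpr hdetS
  set T := S⁻¹ with hTdef
  have hST : S * T = 1 := Matrix.mul_nonsing_inv S hunit
  have hTS : T * S = 1 := Matrix.nonsing_inv_mul S hunit
  have hTh : T.IsHermitian := hS.isHermitian.inv
  set K := T * G * T with hKdef
  have hKpsd : K.PosSemidef := by
    have := hG.mul_mul_conjTranspose_same T
    rwa [hTh.eq] at this
  have hGK : G = S * K * S := by
    rw [hKdef]
    rw [show S * (T * G * T) * S = (S * T) * G * (T * S) by noncomm_ring]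
    rw [hST, hTS, one_mul, mul_one]
  have hGMK : G + M = S * (K + 1) * S := by
    rw [Matrix.mul_add, Matrix.add_mul, ← hGK, Matrix.mul_one, hSS]
  have hlt := det_lt_det_add_one hN hKpsd
  calc G.det = S.det * S.det * K.det := by rw [hGK, Matrix.det_mul, Matrix.det_mul]; ring
    _ < S.det * S.det * (K + 1).det := by
        have hpos : 0 < S.det * S.det := by
          have : S.det * S.det = M.det := by rw [← Matrix.det_mul, hSS]
          rw [this]; exact hdetM
        exact mul_lt_mul_of_pos_left hlt hpos
    _ = (G + M).det := by rw [hGMK, Matrix.det_mul, Matrix.det_mul]; ring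


/-- With the same setting as the uncertainty-principle inequality
`det G(m) ≤ det Cov`, equality holds if and only if the centered matrices
`(A_1)₀, …, (A_N)₀` are linearly dependent over `ℝ`. -/
theorem det_fisher_eq_det_cov_iff
    (n N : ℕ) (hn : 1 ≤ n) (hN : 1 ≤ N)
    (lam : Fin n → ℝ) (hpos : ∀ k, 0 < lam k) (hsum : ∑ k, lam k = 1)
    (A : Fin N → Matrix (Fin n) (Fin n) ℂ) (hA : ∀ h, (A h).IsHermitian)
    (m : ℝ → ℝ → ℝ)
    (hm : ∀ x y : ℝ, 0 < x → 0 < y → 0 < m x y ∧ m x y ≤ (x + y) / 2)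
    (ρ : Matrix (Fin n) (Fin n) ℂ)
    (hρ : ρ = Matrix.diagonal fun k => (lam k : ℂ))
    (A₀ : Fin N → Matrix (Fin n) (Fin n) ℂ)
    (hA₀ : ∀ h, A₀ h = A h - (Matrix.trace (ρ * A h)) • (1 : Matrix (Fin n) (Fin n) ℂ))
    (Cov : Matrix (Fin N) (Fin N) ℝ)
    (hCov : ∀ h j, Cov h j = (Matrix.trace (ρ * A₀ h * A₀ j)).re)
    (G : Matrix (Fin N) (Fin N) ℝ)
    (hG : ∀ h j, G h j = Cov h j -
      ∑ k, ∑ l, m (lam k) (lam l) * (A₀ h k l * (starRingEnd ℂ) (A₀ j k l)).re) :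
    G.det = Cov.det ↔ ¬ LinearIndependent ℝ A₀ := by
  classical
  -- A₀ h is Hermitian
  have hherm : ∀ h, (A₀ h).IsHermitian := by
    intro h
    have hρh : ρᴴ = ρ := by
      rw [hρ]
      ext k l
      by_cases hkl : k = l
      · subst hkl
        simp [Matrix.conjTranspose_apply, Complex.conj_ofReal]
      · simp [Matrix.conjTranspose_apply, Matrix.diagonal_apply_ne, hkl, Ne.symm hkl]
    have hc : star (Matrix.trace (ρ * A h)) = Matrix.trace (ρ * A h) := by
      rw [← Matrix.trace_conjTranspose, Matrix.conjTranspose_mul, (hA h).eq, hρh,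
        Matrix.trace_mul_comm]
    rw [hA₀ h]
    have h1 : ((Matrix.trace (ρ * A h)) • (1 : Matrix (Fin n) (Fin n) ℂ)).IsHermitian := by
      unfold Matrix.IsHermitian
      rw [Matrix.conjTranspose_smul, Matrix.conjTranspose_one, hc]
    exact (hA h).sub h1
  have hentry : ∀ j k l, A₀ j l k = (starRingEnd ℂ) (A₀ j k l) := by
    intro j k l
    exact ((hherm j).apply l k).symm
  -- entrywise formula for Cov
  have hE : ∀ h j, Cov h j
      = ∑ k, ∑ l, lam k * (A₀ h k l * (starRingEnd ℂ) (A₀ j k l)).re := by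
    intro h j
    rw [hCov h j]
    have : Matrix.trace (ρ * A₀ h * A₀ j)
        = ∑ k, ∑ l, (lam k : ℂ) * (A₀ h k l * (starRingEnd ℂ) (A₀ j k l)) := by
      rw [Matrix.trace]
      refine Finset.sum_congr rfl fun k _ => ?_
      rw [Matrix.diag_apply, Matrix.mul_apply]
      refine Finset.sum_congr rfl fun l _ => ?_
      rw [hρ, Matrix.diagonal_mul, ← hentry j k l]
      ring
    rw [this, Complex.re_sum]
    refine Finset.sum_congr rfl fun k _ => ?_
    rw [Complex.re_sum]
    refine Finset.sum_congr rfl fun l _ => ?_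
    rw [Complex.re_ofReal_mul]
  -- entrywise formula for G
  have hGE : ∀ h j, G h j
      = ∑ k, ∑ l, (lam k - m (lam k) (lam l)) * (A₀ h k l * (starRingEnd ℂ) (A₀ j k l)).re := by
    intro h j
    rw [hG h j, hE h j, ← Finset.sum_sub_distrib]
    refine Finset.sum_congr rfl fun k _ => ?_
    rw [← Finset.sum_sub_distrib]
    refine Finset.sum_congr rfl fun l _ => ?_
    ring
  -- the matrix M' := Cov - G
  set M' : Matrix (Fin N) (Fin N) ℝ := Matrix.of (fun h j =>
      ∑ k, ∑ l, m (lam k) (lam l) * (A₀ h k l * (starRingEnd ℂ) (A₀ j k l)).re) with hM'def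
  have hM'E : ∀ h j, M' h j
      = ∑ k, ∑ l, m (lam k) (lam l) * (A₀ h k l * (starRingEnd ℂ) (A₀ j k l)).re :=
    fun h j => rfl
  have hCovGM : Cov = G + M' := by
    funext h j
    have := hG h j
    simp only [Matrix.add_apply, hM'E]
    linarith [hG h j]
  -- symmetry of gram-type matrices
  have hsymm : ∀ (w : Fin n → Fin n → ℝ) (W : Matrix (Fin N) (Fin N) ℝ),
      (∀ h j, W h j = ∑ k, ∑ l, w k l * (A₀ h k l * (starRingEnd ℂ) (A₀ j k l)).re)
      → W.IsHermitian := by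
    intro w W hW
    unfold Matrix.IsHermitian
    funext h j
    rw [Matrix.conjTranspose_apply, star_trivial, hW, hW]
    refine Finset.sum_congr rfl fun k _ => Finset.sum_congr rfl fun l _ => ?_
    rw [re_mul_conj_comm]
  -- s t is Hermitian, so normSq is symmetric
  have hssymm : ∀ (t : Fin N → ℝ) k l,
      Complex.normSq (∑ j, (t j : ℂ) * A₀ j l k) = Complex.normSq (∑ j, (t j : ℂ) * A₀ j k l) := by
    intro t k l
    have : ∑ j, (t j : ℂ) * A₀ j l k = (starRingEnd ℂ) (∑ j, (t j : ℂ) * A₀ j k l) := by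
      rw [map_sum]
      refine Finset.sum_congr rfl fun j _ => ?_
      rw [RingHom.map_mul, Complex.conj_ofReal, hentry j k l]
    rw [this, Complex.normSq_conj]
  -- G is PosSemidef
  have hGpsd : G.PosSemidef := by
    refine posSemidef_iff_dotProduct_mulVec.mpr ⟨hsymm _ G hGE, fun t => ?_⟩
    rw [star_trivial, gram_dot A₀ _ G hGE t]
    set c : Fin n → Fin n → ℝ := fun k l => Complex.normSq (∑ j, (t j : ℂ) * A₀ j k l) with hc
    have hcnn : ∀ k l, 0 ≤ c k l := fun k l => Complex.normSq_nonneg _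
    have hcsymm : ∀ k l, c l k = c k l := fun k l => hssymm t k l
    set Q := ∑ k, ∑ l, (lam k - m (lam k) (lam l)) * c k l with hQ
    have hQ2 : Q + Q = ∑ k, ∑ l,
        ((lam k - m (lam k) (lam l)) + (lam l - m (lam l) (lam k))) * c k l := by
      have hQ' : Q = ∑ k, ∑ l, (lam l - m (lam l) (lam k)) * c k l := by
        rw [hQ, Finset.sum_comm]
        refine Finset.sum_congr rfl fun k _ => Finset.sum_congr rfl fun l _ => ?_
        rw [hcsymm k l]
      nth_rewrite 2 [hQ']
      nth_rewrite 1 [hQ]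
      rw [← Finset.sum_add_distrib]
      refine Finset.sum_congr rfl fun k _ => ?_
      rw [← Finset.sum_add_distrib]
      refine Finset.sum_congr rfl fun l _ => ?_
      ring
    have h2 : 0 ≤ Q + Q := by
      rw [hQ2]
      refine Finset.sum_nonneg fun k _ => Finset.sum_nonneg fun l _ => ?_
      have h1 := hm (lam k) (lam l) (hpos k) (hpos l)
      have h2 := hm (lam l) (lam k) (hpos l) (hpos k)
      have : 0 ≤ (lam k - m (lam k) (lam l)) + (lam l - m (lam l) (lam k)) := by
        linarith [h1.2, h2.2]
      exact mul_nonneg this (hcnn k l)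
    linarith
  constructor
  · -- det equal → dependent
    intro hdet
    by_contra hind
    -- M' is PosDef
    have hM'pd : M'.PosDef := by
      refine posDef_iff_dotProduct_mulVec.mpr ⟨hsymm _ M' hM'E, fun t ht => ?_⟩
      rw [star_trivial, gram_dot A₀ _ M' hM'E t]
      have hnn : ∀ k ∈ Finset.univ, (0:ℝ) ≤
          ∑ l, m (lam k) (lam l) * Complex.normSq (∑ j, (t j : ℂ) * A₀ j k l) := by
        intro k _
        exact Finset.sum_nonneg fun l _ => mul_nonneg (le_of_lt (hm _ _ (hpos k) (hpos l)).1)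
          (Complex.normSq_nonneg _)
      rcases lt_or_eq_of_le (Finset.sum_nonneg hnn) with h | h
      · exact h
      · exfalso
        -- all terms vanish
        have hz : ∀ k l, ∑ j, (t j : ℂ) * A₀ j k l = 0 := by
          intro k l
          have hk := (Finset.sum_eq_zero_iff_of_nonneg hnn).mp h.symm k (Finset.mem_univ k)
          have hnn2 : ∀ l ∈ Finset.univ, (0:ℝ) ≤
              m (lam k) (lam l) * Complex.normSq (∑ j, (t j : ℂ) * A₀ j k l) :=
            fun l _ => mul_nonneg (le_of_lt (hm _ _ (hpos k) (hpos l)).1) (Complex.normSq_nonneg _)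
          have hl := (Finset.sum_eq_zero_iff_of_nonneg hnn2).mp hk l (Finset.mem_univ l)
          have hmpos := (hm (lam k) (lam l) (hpos k) (hpos l)).1
          have : Complex.normSq (∑ j, (t j : ℂ) * A₀ j k l) = 0 := by
            rcases mul_eq_zero.mp hl with h' | h'
            · exact absurd h' (ne_of_gt hmpos)
            · exact h'
          exact Complex.normSq_eq_zero.mp this
        have hzero : ∑ j, t j • A₀ j = 0 := by
          funext k l
          rw [Matrix.zero_apply]
          have : (∑ j, t j • A₀ j) k l = ∑ j, (t j : ℂ) * A₀ j k l := by
            rw [Matrix.sum_apply]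
            refine Finset.sum_congr rfl fun j _ => ?_
            rw [Matrix.smul_apply, Complex.real_smul]
          rw [this, hz k l]
        have := Fintype.linearIndependent_iff.mp hind t hzero
        exact ht (funext this)
    -- strict inequality contradicts equality
    have hlt : G.det < Cov.det := by
      rw [hCovGM]
      exact det_lt_det_add_of_posDef hN hGpsd hM'pd
    rw [hdet] at hlt
    exact lt_irrefl _ hlt
  · -- dependent → both determinants are zero
    intro hdep
    obtain ⟨g, hg0, i, hi⟩ := Fintype.not_linearIndependent_iff.mp hdep
    have hgz : ∀ k l, ∑ j, (g j : ℂ) * A₀ j k l = 0 := by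
      intro k l
      have : (∑ j, g j • A₀ j) k l = ∑ j, (g j : ℂ) * A₀ j k l := by
        rw [Matrix.sum_apply]
        refine Finset.sum_congr rfl fun j _ => ?_
        rw [Matrix.smul_apply, Complex.real_smul]
      rw [← this, hg0, Matrix.zero_apply]
    have hgne : g ≠ 0 := fun h => hi (by rw [h]; rfl)
    have hdG : G.det = 0 :=
      Matrix.exists_mulVec_eq_zero_iff.mp ⟨g, hgne, gram_mulVec_zero A₀ _ G hGE g hgz⟩
    have hdC : Cov.det = 0 :=
      Matrix.exists_mulVec_eq_zero_iff.mp ⟨g, hgne, gram_mulVec_zero A₀ _ Cov hE g hgz⟩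
    rw [hdG, hdC]
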